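/- Let X be a finite set with distribution P and let u, v : X × {1,…,D} → {0,1} satisfy: ∑_d (u_{t,d} + v_{t,d}) = 1 for each t, and ∑_{t,d} 2^{-d}(u_{t,d} + (3/4)v_{t,d}) = 1. Then the objective ∑_{t,d} p_t(u_{t,d}·d + v_{t,d}·(d + C)) with C ≥ 0 is at least H_2(P) − P_v·(2 − log₂3) + C·P_v, where P_v = ∑_{t,d} p_t·v_{t,d}. -/
import Mathlib

open Finset Real in
private lemma aux_jensen_log {D : ℕ} (u v : ℕ → ℝ)
    (hu : ∀ d, u d = 0 ∨ u d = 1) (hv : ∀ d, v d = 0 ∨ v d = 1)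
    (hassign : ∑ d ∈ Finset.Icc 1 D, (u d + v d) = 1) :
    Real.log 2 * (-(∑ d ∈ Finset.Icc 1 D, (u d + v d) * d)
        - (2 - Real.logb 2 3) * ∑ d ∈ Finset.Icc 1 D, v d)
      ≤ Real.log (∑ d ∈ Finset.Icc 1 D, ((2 : ℝ) ^ d)⁻¹ * (u d + (3/4) * v d)) := by
  have hu0 : ∀ d, 0 ≤ u d := fun d => by rcases hu d with h | h <;> rw [h] <;> norm_num
  have hv0 : ∀ d, 0 ≤ v d := fun d => by rcases hv d with h | h <;> rw [h] <;> norm_num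
  set T : Finset (ℕ × Bool) := (Finset.Icc 1 D) ×ˢ (Finset.univ : Finset Bool) with hT
  set w : ℕ × Bool → ℝ := fun i => bif i.2 then v i.1 else u i.1 with hw
  set z : ℕ × Bool → ℝ := fun i => (bif i.2 then (3/4 : ℝ) else 1) * ((2 : ℝ) ^ i.1)⁻¹ with hz
  have h₀ : ∀ i ∈ T, 0 ≤ w i := by
    rintro ⟨d, b⟩ _; cases b <;> simp [hw, hu0 d, hv0 d]
  have h₁ : ∑ i ∈ T, w i = 1 := by
    rw [hT, Finset.sum_product]
    simpa [hw, add_comm] using hassign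
  have hmem : ∀ i ∈ T, z i ∈ Set.Ioi (0 : ℝ) := by
    rintro ⟨d, b⟩ _; cases b <;> simp [hz] <;> positivity
  have hjen := (strictConcaveOn_log_Ioi.concaveOn).le_map_sum h₀ h₁ hmem
  have hzsum : ∑ i ∈ T, w i • z i
      = ∑ d ∈ Finset.Icc 1 D, ((2 : ℝ) ^ d)⁻¹ * (u d + (3/4) * v d) := by
    rw [hT, Finset.sum_product]
    refine Finset.sum_congr rfl fun d _ => ?_
    simp [hw, hz, smul_eq_mul]
    ring
  have hlsum : ∑ i ∈ T, w i • Real.log (z i)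
      = Real.log 2 * (-(∑ d ∈ Finset.Icc 1 D, (u d + v d) * d)
          - (2 - Real.logb 2 3) * ∑ d ∈ Finset.Icc 1 D, v d) := by
    rw [hT, Finset.sum_product]
    rw [mul_sub, mul_neg, ← neg_mul, Finset.mul_sum, Finset.mul_sum, Finset.mul_sum,
      ← Finset.sum_sub_distrib]
    refine Finset.sum_congr rfl fun d _ => ?_
    have h2 : (0:ℝ) < 2 := by norm_num
    have hlog34 : Real.log ((3:ℝ)/4 * ((2:ℝ)^d)⁻¹)
        = Real.log (3/4) - d * Real.log 2 := by
      rw [Real.log_mul (by norm_num) (by positivity), Real.log_inv, Real.log_pow]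
      ring
    have hlog2d : Real.log (((2:ℝ)^d)⁻¹) = -(d * Real.log 2) := by
      rw [Real.log_inv, Real.log_pow]
    have hc : Real.log 2 * (2 - Real.logb 2 3) = -Real.log (3/4) := by
      rw [Real.logb, mul_sub, mul_div_cancel₀ _ (Real.log_ne_zero_of_pos_of_ne_one h2 (by norm_num)),
        Real.log_div (by norm_num) (by norm_num)]
      have : Real.log 4 = 2 * Real.log 2 := by
        rw [show (4:ℝ) = 2^2 by norm_num, Real.log_pow]; push_cast; ring
      rw [this]; ring
    simp only [hw, hz, smul_eq_mul, Fintype.sum_bool, cond_true, cond_false, one_mul]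
    rw [hlog34, hlog2d]
    linear_combination (v d) * hc
  rw [hzsum, hlsum] at hjen
  exact hjen

open Finset in
/-- The cost-penalized IP objective for the binary AIFV tree T0 is bounded
below by H₂(P) − P_v·(2 − log₂ 3) + C·P_v. -/
theorem stmt_19 {X : Type*} [Fintype X] (D : ℕ) (C : ℝ) (hC : 0 ≤ C)
    (p : X → ℝ) (hp : ∀ t, 0 ≤ p t) (hpsum : ∑ t, p t = 1)
    (u v : X → ℕ → ℝ)
    (hu : ∀ t d, u t d = 0 ∨ u t d = 1) (hv : ∀ t d, v t d = 0 ∨ v t d = 1)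
    (hassign : ∀ t, ∑ d ∈ Finset.Icc 1 D, (u t d + v t d) = 1)
    (hKraft : ∑ t, ∑ d ∈ Finset.Icc 1 D,
        ((2 : ℝ) ^ d)⁻¹ * (u t d + (3/4) * v t d) = 1) :
    ∑ t, ∑ d ∈ Finset.Icc 1 D,
        p t * (u t d * d + v t d * ((d : ℝ) + C)) ≥
      (-∑ t, p t * Real.logb 2 (p t))
        - (∑ t, ∑ d ∈ Finset.Icc 1 D, p t * v t d) * (2 - Real.logb 2 3)
        + C * (∑ t, ∑ d ∈ Finset.Icc 1 D, p t * v t d) := by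
  have hu0 : ∀ t d, 0 ≤ u t d := fun t d => by rcases hu t d with h | h <;> rw [h] <;> norm_num
  have hv0 : ∀ t d, 0 ≤ v t d := fun t d => by rcases hv t d with h | h <;> rw [h] <;> norm_num
  have hlog2 : (0:ℝ) < Real.log 2 := Real.log_pos (by norm_num)
  set c : ℝ := 2 - Real.logb 2 3 with hc
  set q : X → ℝ := fun t => ∑ d ∈ Finset.Icc 1 D, ((2 : ℝ) ^ d)⁻¹ * (u t d + (3/4) * v t d)
    with hqdef
  set sv : X → ℝ := fun t => ∑ d ∈ Finset.Icc 1 D, v t d with hsv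
  set L : X → ℝ := fun t => ∑ d ∈ Finset.Icc 1 D, (u t d + v t d) * d with hL
  -- positivity of q
  have hq0 : ∀ t, 0 < q t := by
    intro t
    apply Finset.sum_pos'
    · intro d _
      have := hu0 t d; have := hv0 t d
      positivity
    · have hne : ∑ d ∈ Finset.Icc 1 D, (u t d + v t d) ≠ 0 := by rw [hassign t]; norm_num
      obtain ⟨d, hd, hdne⟩ := Finset.exists_ne_zero_of_sum_ne_zero hne
      refine ⟨d, hd, ?_⟩
      have h1 : 0 < u t d + v t d :=
        lt_of_le_of_ne (by have := hu0 t d; have := hv0 t d; linarith) (Ne.symm hdne)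
      have h2 : 0 < u t d + 3/4 * v t d := by
        have := hu0 t d; have := hv0 t d; linarith
      positivity
  -- key per-t bound
  have hkey : ∀ t, -L t - c * sv t ≤ Real.logb 2 (q t) := by
    intro t
    have h := aux_jensen_log (D := D) (u t) (v t) (hu t) (hv t) (hassign t)
    rw [Real.logb, le_div_iff₀ hlog2]
    calc (-L t - c * sv t) * Real.log 2
        = Real.log 2 * (-(∑ d ∈ Finset.Icc 1 D, (u t d + v t d) * d)
            - (2 - Real.logb 2 3) * ∑ d ∈ Finset.Icc 1 D, v t d) := by
          simp only [hL, hsv, hc]; ring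
      _ ≤ Real.log (q t) := by simp only [hqdef]; exact h
  -- Gibbs
  have hgibbs : ∑ t, p t * (-Real.logb 2 (p t)) ≤ ∑ t, p t * (-Real.logb 2 (q t)) := by
    have h1 : ∀ t, p t * (Real.logb 2 (q t) - Real.logb 2 (p t)) ≤ (q t - p t) / Real.log 2 := by
      intro t
      rcases eq_or_lt_of_le (hp t) with h | h
      · rw [← h]
        simp only [zero_mul, sub_zero]
        exact div_nonneg (hq0 t).le hlog2.le
      · have hqp : 0 < q t / p t := div_pos (hq0 t) h
        have hlog := Real.log_le_sub_one_of_pos hqp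
        rw [Real.log_div (hq0 t).ne' h.ne'] at hlog
        have hps : p t * (Real.log (q t) - Real.log (p t)) ≤ q t - p t := by
          calc p t * (Real.log (q t) - Real.log (p t)) ≤ p t * (q t / p t - 1) :=
                mul_le_mul_of_nonneg_left hlog (hp t)
            _ = q t - p t := by field_simp
        calc p t * (Real.logb 2 (q t) - Real.logb 2 (p t))
            = (p t * (Real.log (q t) - Real.log (p t))) / Real.log 2 := by
              rw [Real.logb, Real.logb]; ring
          _ ≤ (q t - p t) / Real.log 2 := by gcongr
    have h2 : ∑ t, p t * (Real.logb 2 (q t) - Real.logb 2 (p t)) ≤ 0 := by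
      calc ∑ t, p t * (Real.logb 2 (q t) - Real.logb 2 (p t))
          ≤ ∑ t, (q t - p t) / Real.log 2 := Finset.sum_le_sum fun t _ => h1 t
        _ = 0 := by
            rw [← Finset.sum_div, Finset.sum_sub_distrib, hpsum, hKraft]
            simp
    have : ∑ t, p t * (Real.logb 2 (q t) - Real.logb 2 (p t))
        = ∑ t, p t * (-Real.logb 2 (p t)) - ∑ t, p t * (-Real.logb 2 (q t)) := by
      rw [← Finset.sum_sub_distrib]; congr 1; ext t; ring
    linarith [h2, this ▸ h2]
  -- rewrite LHS and RHS of goal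
  have hLHS : ∑ t, ∑ d ∈ Finset.Icc 1 D, p t * (u t d * d + v t d * ((d : ℝ) + C))
      = ∑ t, p t * (L t + C * sv t) := by
    refine Finset.sum_congr rfl fun t _ => ?_
    rw [← Finset.mul_sum]
    congr 1
    simp only [hL, hsv]
    rw [Finset.mul_sum, ← Finset.sum_add_distrib]
    refine Finset.sum_congr rfl fun d _ => ?_; ring
  have hPv : ∑ t, ∑ d ∈ Finset.Icc 1 D, p t * v t d = ∑ t, p t * sv t := by
    refine Finset.sum_congr rfl fun t _ => ?_
    rw [hsv, Finset.mul_sum]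
  rw [ge_iff_le, hLHS, hPv]
  have hmain : ∑ t, p t * (-Real.logb 2 (q t)) ≤ ∑ t, p t * (L t + c * sv t) := by
    refine Finset.sum_le_sum fun t _ => mul_le_mul_of_nonneg_left ?_ (hp t)
    linarith [hkey t]
  have hsplit : ∑ t, p t * (L t + c * sv t)
      = ∑ t, p t * L t + c * ∑ t, p t * sv t := by
    rw [Finset.mul_sum, ← Finset.sum_add_distrib]
    refine Finset.sum_congr rfl fun t _ => ?_; ring
  have hsplit2 : ∑ t, p t * (L t + C * sv t)
      = ∑ t, p t * L t + C * ∑ t, p t * sv t := by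
    rw [Finset.mul_sum, ← Finset.sum_add_distrib]
    refine Finset.sum_congr rfl fun t _ => ?_; ring
  have hH : -∑ t, p t * Real.logb 2 (p t) = ∑ t, p t * (-Real.logb 2 (p t)) := by
    rw [← Finset.sum_neg_distrib]
    refine Finset.sum_congr rfl fun t _ => ?_; ring
  rw [hH, hsplit2]
  have := le_trans hgibbs hmain
  rw [hsplit] at this
  linarith
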